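/- For every n ≥ 5 there exist a finite set X of outcomes with |X| = 4, a set N of n agents, and a profile of dichotomous preferences (≿_i)_{i∈N} on X admitting a lottery that is ex-post efficient but not ex-ante efficient. -/

import Mathlib

attribute [local instance] Classical.propDecidable

/-- The strict part of a preference relation. -/
def strictPref {X : Type*} (r : X → X → Prop) (x y : X) : Prop := r x y ∧ ¬ r y x

/-- A preference: a complete (total) and transitive binary relation. -/
def IsPrefOrder {X : Type*} (r : X → X → Prop) : Prop :=
  (∀ x y, r x y ∨ r y x) ∧ Transitive r

/-- A lottery over the finite set of outcomes `X`. -/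
def IsLottery {X : Type*} [Fintype X] (p : X → ℝ) : Prop :=
  (∀ x, 0 ≤ p x) ∧ ∑ x, p x = 1

/-- Total weight a lottery `p` places on outcomes strictly preferred to `x`. -/
noncomputable def upWeight {X : Type*} [Fintype X] (r : X → X → Prop) (p : X → ℝ) (x : X) : ℝ :=
  ∑ y ∈ Finset.univ.filter (fun y => strictPref r y x), p y

/-- First-order stochastic dominance (weak): `p ≿ q`. -/
def SDge {X : Type*} [Fintype X] (r : X → X → Prop) (p q : X → ℝ) : Prop :=
  ∀ x, upWeight r q x ≤ upWeight r p x

/-- First-order stochastic dominance (strict): `p ≻ q`. -/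
def SDgt {X : Type*} [Fintype X] (r : X → X → Prop) (p q : X → ℝ) : Prop :=
  SDge r p q ∧ ∃ x, upWeight r q x < upWeight r p x

/-- A lottery `p` is ex-ante efficient if no lottery weakly SD-dominates it for all agents
and strictly for some agent. -/
def ExAnteEff {X N : Type*} [Fintype X] (pref : N → X → X → Prop) (p : X → ℝ) : Prop :=
  ¬ ∃ q : X → ℝ, IsLottery q ∧ (∀ i, SDge (pref i) q p) ∧ ∃ j, SDgt (pref j) q p

/-- An outcome is Pareto optimal if no outcome is weakly better for all agents and
strictly better for some agent. -/
def ParetoOptimal {X N : Type*} (pref : N → X → X → Prop) (x : X) : Prop :=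
  ¬ ∃ y, (∀ i, pref i y x) ∧ ∃ j, strictPref (pref j) y x

/-- A lottery is ex-post efficient if it is supported on Pareto optimal outcomes. -/
def ExPostEff {X N : Type*} [Fintype X] (pref : N → X → X → Prop) (p : X → ℝ) : Prop :=
  ∀ x, 0 < p x → ParetoOptimal pref x

/-- `u` is a utility representation of the preference `r`. -/
def Represents {X : Type*} (u : X → ℝ) (r : X → X → Prop) : Prop :=
  ∀ x y, (u y ≤ u x ↔ r x y)

/-- A preference is dichotomous with set `A` of acceptable outcomes. -/
def Dichotomous {X : Type*} (r : X → X → Prop) (A : Set X) : Prop :=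
  ∀ x y, r x y ↔ (x ∈ A ∨ y ∉ A)


/-- For a dichotomous preference, the up-weight is the weight of `A` when `x ∉ A`, else `0`. -/
lemma upW (A : Set (Fin 4)) (p : Fin 4 → ℝ) (x : Fin 4) :
    upWeight (fun a b => a ∈ A ∨ b ∉ A) p x =
      ∑ y, if y ∈ A ∧ x ∉ A then p y else 0 := by
  unfold upWeight strictPref
  rw [Finset.sum_filter]
  congr 1; ext y
  by_cases hy : y ∈ A <;> by_cases hx : x ∈ A <;> simp [hy, hx]

set_option maxHeartbeats 1000000 in
theorem stmt_13 (n : ℕ) (hn : 5 ≤ n) :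
    ∃ (pref : Fin n → Fin 4 → Fin 4 → Prop) (A : Fin n → Set (Fin 4)),
      (∀ i, Dichotomous (pref i) (A i)) ∧
      ∃ p : Fin 4 → ℝ, IsLottery p ∧ ExPostEff pref p ∧ ¬ ExAnteEff pref p := by
  set A : Fin n → Set (Fin 4) := fun i =>
    if i.val = 0 then {0, 2} else if i.val = 1 then {0, 3} else
    if i.val = 2 then {1, 2} else if i.val = 3 then {1, 3} else
    if i.val = 4 then {2, 3} else Set.univ with hA
  refine ⟨fun i a b => a ∈ A i ∨ b ∉ A i, A, fun i x y => Iff.rfl, ?_⟩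
  set p : Fin 4 → ℝ := ![1/2, 1/2, 0, 0] with hp
  set q : Fin 4 → ℝ := ![0, 0, 1/2, 1/2] with hq
  have hup : ∀ i x pp, upWeight (fun a b => a ∈ A i ∨ b ∉ A i) pp x
      = ∑ y, if y ∈ A i ∧ x ∉ A i then pp y else 0 := fun i x pp => upW (A i) pp x
  refine ⟨p, ⟨fun x => by fin_cases x <;> norm_num [hp], by
      simp [Fin.sum_univ_four, hp]; norm_num⟩, ?_, ?_⟩
  · -- ex-post efficiency
    intro x hx
    rintro ⟨y, hall, j, hypref, hneg⟩
    have hx01 : x = 0 ∨ x = 1 := by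
      by_contra h
      push_neg at h
      fin_cases x <;> simp [hp] at hx h
    -- first show y = x
    have hyx : y = x := by
      rcases hx01 with rfl | rfl
      · have h1 := hall ⟨0, by omega⟩
        have h2 := hall ⟨1, by omega⟩
        simp only [hA] at h1 h2
        norm_num at h1 h2
        fin_cases y <;> simp_all
      · have h1 := hall ⟨2, by omega⟩
        have h2 := hall ⟨3, by omega⟩
        simp only [hA] at h1 h2
        norm_num at h1 h2
        fin_cases y <;> simp_all
    subst hyx
    exact hneg (em _ |>.imp id id)
  · -- not ex-ante efficient
    intro hEA
    apply hEA
    refine ⟨q, ⟨fun x => by fin_cases x <;> norm_num [hq], by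
        simp [Fin.sum_univ_four, hq]; norm_num⟩, ?_, ?_⟩
    · intro i x
      rw [hup, hup]
      rcases Nat.lt_or_ge i.val 5 with h5 | h5
      · interval_cases h : i.val <;>
          simp only [hA, h] <;> norm_num <;>
          fin_cases x <;>
          simp [Fin.sum_univ_four, hp, hq, Set.mem_insert_iff] <;> norm_num
      · have : A i = Set.univ := by
          simp only [hA]
          have h0 : i.val ≠ 0 := by omega
          have h1 : i.val ≠ 1 := by omega
          have h2 : i.val ≠ 2 := by omega
          have h3 : i.val ≠ 3 := by omega
          have h4 : i.val ≠ 4 := by omega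
          simp [h0, h1, h2, h3, h4]
        simp [this]
    · refine ⟨⟨4, by omega⟩, ?_, 0, ?_⟩
      · intro x
        rw [hup, hup]
        simp only [hA]
        norm_num
        fin_cases x <;>
          simp [Fin.sum_univ_four, hp, hq, Set.mem_insert_iff] <;> norm_num
      · rw [hup, hup]
        simp only [hA]
        norm_num
        simp [Fin.sum_univ_four, hp, hq, Set.mem_insert_iff]
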